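/- The Gibbs distribution π^η with the groupput throughput T_w = ν_w·c_w satisfies detailed balance with respect to the EconCast-C transition rates: for all w, w' ∈ W, π_w^η · r(w,w') = π_{w'}^η · r(w',w). In particular, π^η is the stationary distribution of the network Markov chain generated by these rates. -/

import Mathlib

open Finset

inductive NodeState : Type
  | s | l | x
deriving DecidableEq

instance instFintypeNodeState : Fintype NodeState where
  elems := {NodeState.s, NodeState.l, NodeState.x}
  complete := by intro a; cases a <;> simp

abbrev NetState (N : ℕ) := Fin N → NodeState

/-- Number of nodes in transmit state. -/
def numTransmit {N : ℕ} (w : NetState N) : ℕ :=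
  (univ.filter fun i => w i = NodeState.x).card

/-- Number of nodes in listen state (`c_w`). -/
def numListen {N : ℕ} (w : NetState N) : ℕ :=
  (univ.filter fun i => w i = NodeState.l).card

/-- The (finite) set `W` of collision-free network states. -/
def CF (N : ℕ) : Finset (NetState N) :=
  univ.filter fun w => numTransmit w ≤ 1

/-- Indicator `ν_w` that exactly one node is transmitting. -/
def nu {N : ℕ} (w : NetState N) : ℝ := if numTransmit w = 1 then 1 else 0

/-- Groupput throughput `T_w = ν_w · c_w` of a state. -/
noncomputable def Tg {N : ℕ} (w : NetState N) : ℝ := nu w * (numListen w : ℝ)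

/-- The penalty `P_w = Σ_{i: w_i=l} η_i L_i + Σ_{i: w_i=x} η_i X_i`. -/
noncomputable def penalty {N : ℕ} (η L X : Fin N → ℝ) (w : NetState N) : ℝ :=
  ∑ i ∈ univ.filter (fun i => w i = NodeState.l), η i * L i
  + ∑ i ∈ univ.filter (fun i => w i = NodeState.x), η i * X i

/-- Normalizing constant `Z^η`. -/
noncomputable def Zfun (N : ℕ) (σ : ℝ) (η L X : Fin N → ℝ) (T : NetState N → ℝ) : ℝ :=
  ∑ w ∈ CF N, Real.exp ((T w - penalty η L X w) / σ)

/-- The Gibbs distribution `π^η_w = exp((T_w − P_w)/σ)/Z^η`. -/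
noncomputable def gibbs (N : ℕ) (σ : ℝ) (η L X : Fin N → ℝ) (T : NetState N → ℝ)
    (w : NetState N) : ℝ :=
  Real.exp ((T w - penalty η L X w) / σ) / Zfun N σ η L X T

/-- EconCast-C (groupput mode) transition rates: from a state with no
transmitter, a sleeping node wakes to listen at rate `exp(−η_i L_i/σ)`, a
listening node goes to sleep at rate `1`, and a listening node starts
transmitting at rate `exp(η_i(L_i − X_i)/σ)`; a transmitting node moves back to
listen at rate `exp(−c_w/σ)`; all other rates vanish. -/
noncomputable def rateC (N : ℕ) (σ : ℝ) (η L X : Fin N → ℝ) (w w' : NetState N) : ℝ :=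
  (∑ i : Fin N, if w i = NodeState.s ∧ numTransmit w = 0 ∧ w' = Function.update w i NodeState.l
      then Real.exp (-(η i * L i) / σ) else 0)
  + (∑ i : Fin N, if w i = NodeState.l ∧ numTransmit w = 0 ∧ w' = Function.update w i NodeState.s
      then 1 else 0)
  + (∑ i : Fin N, if w i = NodeState.l ∧ numTransmit w = 0 ∧ w' = Function.update w i NodeState.x
      then Real.exp (η i * (L i - X i) / σ) else 0)
  + (∑ i : Fin N, if w i = NodeState.x ∧ w' = Function.update w i NodeState.l
      then Real.exp (-(numListen w : ℝ) / σ) else 0)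


lemma update_filter {N : ℕ} (w : NetState N) (i : Fin N) (a v : NodeState) :
    (univ.filter fun j => Function.update w i a j = v) =
      if a = v then insert i (univ.filter fun j => w j = v)
      else (univ.filter fun j => w j = v).erase i := by
  ext j
  rcases eq_or_ne j i with rfl | h
  · simp only [Function.update_self, mem_filter, mem_univ, true_and]
    split <;> simp_all
  · simp only [Function.update_of_ne h, mem_filter, mem_univ, true_and]
    split <;> simp [h]

lemma numTransmit_eq_zero {N : ℕ} {w : NetState N} :
    numTransmit w = 0 ↔ ∀ j, w j ≠ NodeState.x := by
  simp [numTransmit, Finset.card_eq_zero, Finset.filter_eq_empty_iff]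

lemma transmit_filter_empty {N : ℕ} {w : NetState N} (h : numTransmit w = 0) :
    (univ.filter fun j => w j = NodeState.x) = ∅ :=
  Finset.card_eq_zero.1 h

lemma numTransmit_update_l {N : ℕ} (w : NetState N) (i : Fin N)
    (h : numTransmit w = 0) :
    numTransmit (Function.update w i NodeState.l) = 0 := by
  rw [numTransmit_eq_zero]
  intro j
  rcases eq_or_ne j i with rfl | hj
  · simp
  · simp [Function.update_of_ne hj, numTransmit_eq_zero.1 h j]

lemma numTransmit_update_s {N : ℕ} (w : NetState N) (i : Fin N)
    (h : numTransmit w = 0) :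
    numTransmit (Function.update w i NodeState.s) = 0 := by
  rw [numTransmit_eq_zero]
  intro j
  rcases eq_or_ne j i with rfl | hj
  · simp
  · simp [Function.update_of_ne hj, numTransmit_eq_zero.1 h j]

lemma numTransmit_update_x {N : ℕ} (w : NetState N) (i : Fin N)
    (h : numTransmit w = 0) :
    numTransmit (Function.update w i NodeState.x) = 1 := by
  unfold numTransmit
  rw [update_filter, if_pos rfl, transmit_filter_empty h]
  simp

lemma numListen_update_x {N : ℕ} (w : NetState N) (i : Fin N)
    (hwl : w i = NodeState.l) :
    numListen (Function.update w i NodeState.x) + 1 = numListen w := by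
  have hmem : i ∈ univ.filter fun j => w j = NodeState.l := by simp [hwl]
  unfold numListen
  rw [update_filter, if_neg (by simp), Finset.card_erase_of_mem hmem]
  have : 1 ≤ (univ.filter fun j => w j = NodeState.l).card :=
    Finset.card_pos.2 ⟨i, hmem⟩
  omega

lemma penalty_update_sl {N : ℕ} (η L X : Fin N → ℝ) (w : NetState N) (i : Fin N)
    (hws : w i = NodeState.s) :
    penalty η L X (Function.update w i NodeState.l)
      = penalty η L X w + η i * L i := by
  unfold penalty
  rw [update_filter, if_pos rfl, update_filter, if_neg (by simp)]
  have hni_l : i ∉ univ.filter fun j => w j = NodeState.l := by simp [hws]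
  have hni_x : i ∉ univ.filter fun j => w j = NodeState.x := by simp [hws]
  rw [Finset.sum_insert hni_l, Finset.erase_eq_of_notMem hni_x]
  ring

lemma penalty_update_lx {N : ℕ} (η L X : Fin N → ℝ) (w : NetState N) (i : Fin N)
    (hwl : w i = NodeState.l) (h0 : numTransmit w = 0) :
    penalty η L X (Function.update w i NodeState.x)
      = penalty η L X w - η i * L i + η i * X i := by
  unfold penalty
  rw [update_filter, if_neg (by simp), update_filter, if_pos rfl,
    transmit_filter_empty h0]
  have hmem : i ∈ univ.filter fun j => w j = NodeState.l := by simp [hwl]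
  rw [Finset.sum_erase_eq_sub hmem]
  simp only [Finset.sum_insert (Finset.notMem_empty i), Finset.sum_empty]
  ring

lemma Tg_of_noTransmit {N : ℕ} {w : NetState N} (h : numTransmit w = 0) : Tg w = 0 := by
  simp [Tg, nu, h]

lemma ite_congr0 {c d : Prop} [Decidable c] [Decidable d] {a b : ℝ}
    (h : c ↔ d) (hv : c → a = b) :
    (if c then a else 0) = (if d then b else 0) := by
  by_cases hc : c
  · rw [if_pos hc, if_pos (h.1 hc), hv hc]
  · rw [if_neg hc, if_neg (fun hd => hc (h.2 hd))]

/-- Pairing of the sleep→listen term of `w` with the listen→sleep term of `w'`. -/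
lemma pairA {N : ℕ} (σ : ℝ) (η L X : Fin N → ℝ) (w w' : NetState N) (i : Fin N) :
    (if w i = NodeState.s ∧ numTransmit w = 0 ∧ w' = Function.update w i NodeState.l
      then gibbs N σ η L X Tg w * Real.exp (-(η i * L i) / σ) else 0)
    = (if w' i = NodeState.l ∧ numTransmit w' = 0 ∧ w = Function.update w' i NodeState.s
      then gibbs N σ η L X Tg w' * 1 else 0) := by
  apply ite_congr0
  · constructor
    · rintro ⟨h1, h2, rfl⟩
      refine ⟨Function.update_self .., numTransmit_update_l w i h2, ?_⟩
      rw [Function.update_idem, ← h1, Function.update_eq_self]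
    · rintro ⟨h1, h2, rfl⟩
      refine ⟨Function.update_self .., numTransmit_update_s w' i h2, ?_⟩
      rw [Function.update_idem, ← h1, Function.update_eq_self]
  · rintro ⟨h1, h2, rfl⟩
    unfold gibbs
    rw [mul_one, div_mul_eq_mul_div, ← Real.exp_add]
    congr 2
    rw [Tg_of_noTransmit h2, Tg_of_noTransmit (numTransmit_update_l w i h2),
      penalty_update_sl η L X w i h1]
    ring

/-- Pairing of the listen→transmit term of `w` with the transmit→listen term of `w'`. -/
lemma pairC {N : ℕ} (σ : ℝ) (η L X : Fin N → ℝ) (w w' : NetState N) (i : Fin N)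
    (hw' : w' ∈ CF N) :
    (if w i = NodeState.l ∧ numTransmit w = 0 ∧ w' = Function.update w i NodeState.x
      then gibbs N σ η L X Tg w * Real.exp (η i * (L i - X i) / σ) else 0)
    = (if w' i = NodeState.x ∧ w = Function.update w' i NodeState.l
      then gibbs N σ η L X Tg w' * Real.exp (-(numListen w' : ℝ) / σ) else 0) := by
  apply ite_congr0
  · constructor
    · rintro ⟨h1, h2, rfl⟩
      refine ⟨Function.update_self .., ?_⟩
      rw [Function.update_idem, ← h1, Function.update_eq_self]
    · rintro ⟨h1, rfl⟩
      have hCF : numTransmit w' ≤ 1 := by simpa [CF] using hw'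
      have hx : i ∈ univ.filter fun j => w' j = NodeState.x := by simp [h1]
      refine ⟨Function.update_self .., ?_, ?_⟩
      · rw [numTransmit_eq_zero]
        intro j
        rcases eq_or_ne j i with rfl | hj
        · simp
        · rw [Function.update_of_ne hj]
          intro hc
          have : 1 < numTransmit w' :=
            Finset.one_lt_card.2 ⟨i, hx, j, by simp [hc], fun h => hj h.symm⟩
          omega
      · rw [Function.update_idem, ← h1, Function.update_eq_self]
  · rintro ⟨h1, h2, rfl⟩
    have hT1 : numTransmit (Function.update w i NodeState.x) = 1 :=
      numTransmit_update_x w i h2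
    unfold gibbs
    rw [div_mul_eq_mul_div, div_mul_eq_mul_div, ← Real.exp_add, ← Real.exp_add]
    congr 2
    rw [Tg_of_noTransmit h2, penalty_update_lx η L X w i h1 h2]
    have hc : (numListen (Function.update w i NodeState.x) : ℝ) + 1 = numListen w := by
      exact_mod_cast congrArg (Nat.cast : ℕ → ℝ) (numListen_update_x w i h1)
    simp only [Tg, nu, hT1, eq_self_iff_true, if_true, one_mul]
    ring

/-- The Gibbs distribution with groupput throughput satisfies
detailed balance w.r.t. the EconCast-C transition rates; in particular it is
stationary for the network Markov chain. -/
theorem gibbs_detailed_balance_econcastC_groupput (N : ℕ) (hN : 2 ≤ N)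
    (σ : ℝ) (hσ : 0 < σ) (η L X : Fin N → ℝ)
    (hη : ∀ i, 0 ≤ η i) (hL : ∀ i, 0 < L i) (hX : ∀ i, 0 < X i) :
    (∀ w ∈ CF N, ∀ w' ∈ CF N,
      gibbs N σ η L X Tg w * rateC N σ η L X w w'
        = gibbs N σ η L X Tg w' * rateC N σ η L X w' w)
    ∧ (∀ w ∈ CF N,
      ∑ w' ∈ CF N, gibbs N σ η L X Tg w' * rateC N σ η L X w' w
        = gibbs N σ η L X Tg w * ∑ w' ∈ CF N, rateC N σ η L X w w') := by
  have db : ∀ w ∈ CF N, ∀ w' ∈ CF N,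
      gibbs N σ η L X Tg w * rateC N σ η L X w w'
        = gibbs N σ η L X Tg w' * rateC N σ η L X w' w := by
    intro w hw w' hw'
    simp only [rateC, mul_add, Finset.mul_sum, mul_ite, mul_zero]
    rw [Finset.sum_congr rfl (fun i _ => pairA σ η L X w w' i),
        Finset.sum_congr rfl (fun i _ => (pairA σ η L X w' w i).symm),
        Finset.sum_congr rfl (fun i _ => pairC σ η L X w w' i hw'),
        Finset.sum_congr rfl (fun i _ => (pairC σ η L X w' w i hw).symm)]
    ring
  refine ⟨db, fun w hw => ?_⟩
  rw [Finset.mul_sum]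
  exact Finset.sum_congr rfl fun w' hw' => (db w hw w' hw').symm
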